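/- Let d ≥ 1, let 0 < L ≤ L̄, let θ ≥ 1, let X ⊆ ℝ^d be nonempty, closed and convex, let f : ℝ^d → ℝ be convex and L-Lipschitz, let x₀, x★ ∈ X, r_ε > 0, and let (g_k)_{k≥0} be vectors in ℝ^d with ‖g_k‖ ≤ Ld for all k. Define recursively r̄_k = max(r_ε, max_{j≤k} ‖x_j − x₀‖), G_{−1} = 0, G_k = Σ_{i=0}^{k} ‖g_i‖², G'_k = 8⁴ θ (log(k+2)+1)² (G_{k−1} + 16 θ d² L̄²), η_k = r̄_k / √(G'_k), μ_k = d r̄_k / (k+1)², and x_{k+1} = Π_X(x_k − η_k g_k). Set Δ_k = ∇f_{μ_k}(x_k) − g_k, s₀ = ‖x₀ − x★‖, s̄_t = max_{k≤t} ‖x_k − x★‖, and x̄_t = (Σ_{k=0}^{t−1} r̄_k)^{−1} Σ_{k=0}^{t−1} r̄_k x_k. Fix t ≥ 1 and assume |Σ_{k=0}^{t−1} r̄_k ⟨Δ_k, x_k − x★⟩| ≤ 8 r̄_{t−1} s̄_{t−1} √(θ G_{t−1} + 4 L² d² θ²). Then f(x̄_t) − f(x★) ≤ 20 θ (r̄_t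 + s₀)(√(G'_{t−1}) + L d) / (Σ_{k=0}^{t−1} r̄_k / r̄_t). -/

import Mathlib

open MeasureTheory Metric Finset
open scoped RealInnerProductSpace

/-- The uniform probability measure on the closed Euclidean unit ball in `ℝ^d`. -/
noncomputable def ballUniform (d : ℕ) : Measure (EuclideanSpace ℝ (Fin d)) :=
  (volume (Metric.closedBall (0 : EuclideanSpace ℝ (Fin d)) 1))⁻¹ •
    volume.restrict (Metric.closedBall 0 1)

/-- The ball-smoothed function `f_μ(x) = E_{u ∼ U(B^d)} [f (x + μ u)]`. -/
noncomputable def smoothed (d : ℕ) (f : EuclideanSpace ℝ (Fin d) → ℝ) (μ : ℝ)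
    (x : EuclideanSpace ℝ (Fin d)) : ℝ :=
  ∫ u, f (x + μ • u) ∂(ballUniform d)

/-- The uniform (rotation-invariant) probability measure on the unit sphere `S^{d-1}`,
realized as the pushforward of the uniform measure on the unit ball under radial
normalization `u ↦ u / ‖u‖`. -/
noncomputable def sphereUniform (d : ℕ) : Measure (EuclideanSpace ℝ (Fin d)) :=
  (ballUniform d).map (fun u => ‖u‖⁻¹ • u)

section Aux

set_option linter.unusedSectionVars false

variable {d : ℕ}

lemma ball_vol_pos : 0 < volume (Metric.closedBall (0 : EuclideanSpace ℝ (Fin d)) 1) :=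
  measure_closedBall_pos _ _ one_pos

lemma ball_vol_lt_top : volume (Metric.closedBall (0 : EuclideanSpace ℝ (Fin d)) 1) < ⊤ :=
  measure_closedBall_lt_top

instance ballUniform_prob : IsProbabilityMeasure (ballUniform d) := by
  constructor
  rw [ballUniform]
  simp only [Measure.smul_apply, Measure.restrict_apply MeasurableSet.univ, Set.univ_inter,
    smul_eq_mul]
  exact ENNReal.inv_mul_cancel (ball_vol_pos).ne' (ball_vol_lt_top).ne

lemma smoothed_integrable (f : EuclideanSpace ℝ (Fin d) → ℝ) (hf : Continuous f) (μ : ℝ)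
    (x : EuclideanSpace ℝ (Fin d)) :
    Integrable (fun u => f (x + μ • u)) (ballUniform d) := by
  rw [ballUniform]
  refine Integrable.smul_measure ?_ (by simp [ball_vol_pos.ne'])
  exact ContinuousOn.integrableOn_compact (isCompact_closedBall 0 1)
    ((by fun_prop : Continuous fun u : EuclideanSpace ℝ (Fin d) => f (x + μ • u)).continuousOn)

lemma ae_ballUniform {p : EuclideanSpace ℝ (Fin d) → Prop}
    (h : ∀ᵐ u ∂(volume : Measure (EuclideanSpace ℝ (Fin d))), p u) :
    ∀ᵐ u ∂(ballUniform d), p u := by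
  rw [ballUniform]
  rw [Measure.ae_ennreal_smul_measure_eq (by simp [ball_vol_pos.ne', ball_vol_lt_top.ne])]
  exact ae_restrict_of_ae h

lemma ae_ballUniform_mem : ∀ᵐ u ∂(ballUniform d), ‖u‖ ≤ 1 := by
  rw [ballUniform]
  rw [Measure.ae_ennreal_smul_measure_eq (by simp [ball_vol_pos.ne', ball_vol_lt_top.ne])]
  filter_upwards [ae_restrict_mem measurableSet_closedBall] with u hu
  simpa using hu

lemma smoothed_close {L : ℝ} (f : EuclideanSpace ℝ (Fin d) → ℝ)
    (hlip : ∀ x y, |f x - f y| ≤ L * ‖x - y‖) (hL : 0 ≤ L) {μ : ℝ} (hμ : 0 ≤ μ)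
    (hf : Continuous f) (x : EuclideanSpace ℝ (Fin d)) :
    |smoothed d f μ x - f x| ≤ L * μ := by
  have h1 : smoothed d f μ x - f x = ∫ u, (f (x + μ • u) - f x) ∂(ballUniform d) := by
    rw [integral_sub (smoothed_integrable f hf μ x) (integrable_const _), integral_const]
    simp [smoothed]
  rw [h1]
  have hsint : Integrable (fun u => f (x + μ • u) - f x) (ballUniform d) :=
    (smoothed_integrable f hf μ x).sub (integrable_const _)
  calc |∫ u, (f (x + μ • u) - f x) ∂(ballUniform d)|
      ≤ ∫ u, |f (x + μ • u) - f x| ∂(ballUniform d) := by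
        simpa [Real.norm_eq_abs] using norm_integral_le_integral_norm
          (μ := ballUniform d) (fun u => f (x + μ • u) - f x)
    _ ≤ ∫ _u, L * μ ∂(ballUniform d) := by
        refine integral_mono_of_nonneg (Filter.Eventually.of_forall fun u => abs_nonneg _)
          (integrable_const _) ?_
        filter_upwards [ae_ballUniform_mem] with u hu
        show |f (x + μ • u) - f x| ≤ L * μ
        calc |f (x + μ • u) - f x| ≤ L * ‖x + μ • u - x‖ := hlip _ _
          _ = L * (μ * ‖u‖) := by
              rw [add_sub_cancel_left, norm_smul, Real.norm_eq_abs, abs_of_nonneg hμ]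
          _ ≤ L * (μ * 1) := by gcongr
          _ = L * μ := by ring
    _ = L * μ := by simp

lemma smoothed_convexOn (f : EuclideanSpace ℝ (Fin d) → ℝ)
    (hconv : ConvexOn ℝ Set.univ f) (hf : Continuous f) (μ : ℝ) :
    ConvexOn ℝ Set.univ (smoothed d f μ) := by
  refine ⟨convex_univ, fun x _ y _ a b ha hb hab => ?_⟩
  have key : ∀ u : EuclideanSpace ℝ (Fin d),
      f (a • x + b • y + μ • u) ≤ a * f (x + μ • u) + b * f (y + μ • u) := by
    intro u
    have h2 : a • x + b • y + μ • u = a • (x + μ • u) + b • (y + μ • u) := by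
      have hb' : b = 1 - a := by linarith
      subst hb'
      module
    rw [h2]
    exact hconv.2 (Set.mem_univ _) (Set.mem_univ _) ha hb hab
  have hint1 := smoothed_integrable f hf μ x
  have hint2 := smoothed_integrable f hf μ y
  calc smoothed d f μ (a • x + b • y)
      = ∫ u, f (a • x + b • y + μ • u) ∂(ballUniform d) := rfl
    _ ≤ ∫ u, (a * f (x + μ • u) + b * f (y + μ • u)) ∂(ballUniform d) := by
        refine integral_mono (smoothed_integrable f hf μ _) ?_ key
        exact (hint1.const_mul a).add (hint2.const_mul b)
    _ = a * smoothed d f μ x + b * smoothed d f μ y := by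
        rw [integral_add (hint1.const_mul a) (hint2.const_mul b),
          integral_const_mul, integral_const_mul]
        rfl

set_option maxHeartbeats 1000000 in
lemma smoothed_differentiableAt {L : NNReal} (f : EuclideanSpace ℝ (Fin d) → ℝ)
    (hf : LipschitzWith L f) {μ : ℝ} (hμ : μ ≠ 0) (x₀ : EuclideanSpace ℝ (Fin d)) :
    DifferentiableAt ℝ (smoothed d f μ) x₀ := by
  have hae : ∀ᵐ u ∂(ballUniform d), DifferentiableAt ℝ f (x₀ + μ • u) := by
    refine ae_ballUniform ?_
    have h0 : ∀ᵐ y ∂(volume : Measure (EuclideanSpace ℝ (Fin d))), DifferentiableAt ℝ f y :=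
      hf.ae_differentiableAt
    rw [ae_iff] at h0 ⊢
    have heq : {u | ¬ DifferentiableAt ℝ f (x₀ + μ • u)} =
        (μ • ·) ⁻¹' ((fun y => x₀ + y) ⁻¹' {y | ¬ DifferentiableAt ℝ f y}) := rfl
    rw [heq, Measure.addHaar_preimage_smul volume hμ, measure_preimage_add, h0, mul_zero]
  have key := hasFDerivAt_integral_of_dominated_loc_of_lip
    (F := fun x u => f (x + μ • u)) (F' := fun u => fderiv ℝ f (x₀ + μ • u))
    (μ := ballUniform d) (x₀ := x₀) (bound := fun _ => (L : ℝ)) (s := Metric.ball x₀ 1) (Metric.ball_mem_nhds x₀ one_pos)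
    (Filter.Eventually.of_forall fun x =>
      ((by have := hf.continuous; fun_prop : Continuous fun u : EuclideanSpace ℝ (Fin d) => f (x + μ • u)).aestronglyMeasurable))
    (smoothed_integrable f hf.continuous μ x₀)
    (((measurable_fderiv ℝ f).comp
      (measurable_const.add (measurable_id.const_smul μ))).aestronglyMeasurable)
    (Filter.Eventually.of_forall fun u => ?_)
    (integrable_const _)
    ?_
  · exact key.2.differentiableAt
  · have h1 : LipschitzWith L (fun x => f (x + μ • u)) := by
      have : LipschitzWith 1 (fun x : EuclideanSpace ℝ (Fin d) => x + μ • u) :=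
        LipschitzWith.of_dist_le_mul fun a b => by
          simp [dist_eq_norm, add_sub_add_right_eq_sub]
      simpa [Function.comp_def] using hf.comp this
    have h2 : L ≤ Real.nnabs (L : ℝ) := by simp
    exact (h1.weaken h2).lipschitzOnWith
  · filter_upwards [hae] with u hu
    have h3 : HasFDerivAt (fun x => x + μ • u) (ContinuousLinearMap.id ℝ _) x₀ :=
      (hasFDerivAt_id x₀).add_const (μ • u)
    have := hu.hasFDerivAt.comp x₀ h3
    exact this

variable {F : Type*} [NormedAddCommGroup F] [InnerProductSpace ℝ F] [CompleteSpace F]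

lemma convex_grad_ineq (φ : F → ℝ) (hφ : ConvexOn ℝ Set.univ φ) {x : F}
    (hd : DifferentiableAt ℝ φ x) (y : F) :
    φ x - φ y ≤ ⟪gradient φ x, x - y⟫ := by
  have hline : HasDerivAt (fun t : ℝ => x + t • (y - x)) (y - x) 0 := by
    simpa using ((hasDerivAt_id (0:ℝ)).smul_const (y - x)).const_add x
  have hgrad := hd.hasGradientAt
  have hF := hgrad.hasFDerivAt
  have hcomp : HasDerivAt (fun t : ℝ => φ (x + t • (y - x))) ⟪gradient φ x, y - x⟫ 0 := by
    have hF' : HasFDerivAt φ ((InnerProductSpace.toDual ℝ F) (gradient φ x))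
        ((fun t : ℝ => x + t • (y - x)) 0) := by simpa using hF
    have := hF'.comp_hasDerivAt (0:ℝ) hline
    exact this
  have hψ : ConvexOn ℝ Set.univ (fun t : ℝ => φ (x + t • (y - x))) := by
    have haff : ConvexOn ℝ ((AffineMap.lineMap x y : ℝ →ᵃ[ℝ] F) ⁻¹' Set.univ)
        (φ ∘ (AffineMap.lineMap x y : ℝ →ᵃ[ℝ] F)) := hφ.comp_affineMap _
    have heq : (φ ∘ (AffineMap.lineMap x y : ℝ →ᵃ[ℝ] F)) = fun t : ℝ => φ (x + t • (y - x)) := by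
      funext t
      simp [AffineMap.lineMap_apply]
      congr 1
      abel
    rw [heq] at haff
    simpa using haff
  have hslope := hψ.le_slope_of_hasDerivAt (Set.mem_univ (0:ℝ)) (Set.mem_univ (1:ℝ))
    zero_lt_one hcomp
  rw [slope_def_field] at hslope
  simp only [zero_smul, add_zero, one_smul] at hslope
  have h1 : φ (x + (y - x)) = φ y := by congr 1; abel
  rw [h1] at hslope
  have h2 : ⟪gradient φ x, x - y⟫ = -⟪gradient φ x, y - x⟫ := by
    rw [← inner_neg_right]; congr 1; abel
  have h3 : (φ y - φ x) / (1 - 0) = φ y - φ x := by norm_num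
  rw [h3] at hslope
  linarith [hslope, h2.ge]

lemma proj_nonexpansive {X : Set F} (hXconv : Convex ℝ X)
    (proj : F → F) (hprojMem : ∀ z, proj z ∈ X)
    (hprojMin : ∀ z, ∀ y ∈ X, ‖z - proj z‖ ≤ ‖z - y‖)
    (z : F) {y : F} (hy : y ∈ X) : ‖proj z - y‖ ≤ ‖z - y‖ := by
  set p := proj z with hp
  have hvar : ⟪z - p, y - p⟫ ≤ 0 := by
    by_contra hc
    push_neg at hc
    have hyp : y - p ≠ 0 := by
      intro h0
      rw [h0, inner_zero_right] at hc
      exact lt_irrefl 0 hc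
    set c := ⟪z - p, y - p⟫ with hcdef
    have hnorm : 0 < ‖y - p‖ ^ 2 := pow_pos (norm_pos_iff.2 hyp) 2
    set s := min 1 (c / ‖y - p‖ ^ 2) with hs
    have hs0 : 0 < s := lt_min one_pos (div_pos hc hnorm)
    have hs1 : s ≤ 1 := min_le_left _ _
    have hmem : p + s • (y - p) ∈ X := hXconv.add_smul_sub_mem (hprojMem z) hy ⟨le_of_lt hs0, hs1⟩
    have h1 : ‖z - p‖ ≤ ‖z - (p + s • (y - p))‖ := hprojMin z _ hmem
    have heq : z - (p + s • (y - p)) = (z - p) - s • (y - p) := by abel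
    have h2 : ‖z - (p + s • (y - p))‖ ^ 2 = ‖z - p‖ ^ 2 - 2 * (s * c) + s ^ 2 * ‖y - p‖ ^ 2 := by
      have hns : ‖s • (y - p)‖ ^ 2 = s ^ 2 * ‖y - p‖ ^ 2 := by
        rw [norm_smul, mul_pow, Real.norm_eq_abs, sq_abs]
      have hin : ⟪z - p, s • (y - p)⟫ = s * c := real_inner_smul_right _ _ _
      rw [heq, norm_sub_sq_real, hns, hin]
    have h3 : ‖z - p‖ ^ 2 ≤ ‖z - (p + s • (y - p))‖ ^ 2 :=
      pow_le_pow_left₀ (norm_nonneg _) h1 2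
    have h4 : 2 * c ≤ s * ‖y - p‖ ^ 2 := by nlinarith
    have h5 : s * ‖y - p‖ ^ 2 ≤ c := by
      have := min_le_right 1 (c / ‖y - p‖ ^ 2)
      calc s * ‖y - p‖ ^ 2 ≤ (c / ‖y - p‖ ^ 2) * ‖y - p‖ ^ 2 :=
            mul_le_mul_of_nonneg_right this (le_of_lt hnorm)
        _ = c := div_mul_cancel₀ _ (ne_of_gt hnorm)
    linarith
  have hkey : ‖p - y‖ ^ 2 ≤ ‖z - y‖ ^ 2 := by
    have heq : z - y = (z - p) + (p - y) := by abel
    rw [heq, norm_add_sq_real]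
    have h6 : ⟪z - p, p - y⟫ = -⟪z - p, y - p⟫ := by
      rw [← inner_neg_right]; congr 1; abel
    nlinarith [sq_nonneg ‖z - p‖]
  exact (pow_le_pow_iff_left₀ (norm_nonneg _) (norm_nonneg _) (by norm_num)).1 hkey

lemma abel_bound (a b : ℕ → ℝ) (B : ℝ) (ha0 : 0 ≤ a 0) (hmono : Monotone a) :
    ∀ t : ℕ, 1 ≤ t → (∀ k ≤ t, |b k| ≤ B) →
    ∑ k ∈ range t, a k * (b k - b (k + 1)) ≤ a (t - 1) * (B - b t) := by
  intro t
  induction t with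
  | zero => omega
  | succ n ih =>
    intro _ hb
    rcases Nat.eq_zero_or_pos n with h1 | h1
    · subst h1
      simp only [zero_add, Finset.sum_range_one]
      have hb0 := (abs_le.1 (hb 0 (by omega))).2
      have : a 0 * (b 0 - b 1) ≤ a 0 * (B - b 1) := by
        apply mul_le_mul_of_nonneg_left _ ha0
        linarith
      exact this
    · have h2 := ih h1 (fun k hk => hb k (by omega))
      rw [Finset.sum_range_succ]
      have han : 0 ≤ a n := le_trans ha0 (hmono (Nat.zero_le n))
      have hbn := (abs_le.1 (hb n (by omega))).2
      have h3 : a (n - 1) * (B - b n) ≤ a n * (B - b n) := by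
        apply mul_le_mul_of_nonneg_right (hmono (by omega))
        linarith
      have hfinal : a n * (B - b n) + a n * (b n - b (n + 1)) = a n * (B - b (n + 1)) := by ring
      have hnn : n + 1 - 1 = n := by omega
      rw [hnn]
      linarith


noncomputable def Hfun (v : ℕ → ℝ) (c : ℝ) (k : ℕ) : ℝ :=
  Real.sqrt ((∑ i ∈ Finset.range k, v i) + c)

lemma Hfun_sq {v : ℕ → ℝ} {c : ℝ} (hv : ∀ i, 0 ≤ v i) (hc : 0 ≤ c) (k : ℕ) :
    (Hfun v c k) ^ 2 = (∑ i ∈ Finset.range k, v i) + c :=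
  Real.sq_sqrt (add_nonneg (Finset.sum_nonneg fun i _ => hv i) hc)

lemma Hfun_pos {v : ℕ → ℝ} {c : ℝ} (hv : ∀ i, 0 ≤ v i) (hc : 0 < c) (k : ℕ) :
    0 < Hfun v c k :=
  Real.sqrt_pos.2 (by
    have := Finset.sum_nonneg (s := Finset.range k) fun i _ => hv i
    linarith)

lemma Hfun_c_le {v : ℕ → ℝ} {c : ℝ} (hv : ∀ i, 0 ≤ v i) (hc : 0 ≤ c) (k : ℕ) :
    c ≤ (Hfun v c k) ^ 2 := by
  rw [Hfun_sq hv hc]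
  have := Finset.sum_nonneg (s := Finset.range k) fun i _ => hv i
  linarith

lemma Hfun_succ {v : ℕ → ℝ} {c : ℝ} (hv : ∀ i, 0 ≤ v i) (hc : 0 ≤ c) (k : ℕ) :
    (Hfun v c (k+1)) ^ 2 = (Hfun v c k) ^ 2 + v k := by
  rw [Hfun_sq hv hc, Hfun_sq hv hc, Finset.sum_range_succ]
  ring

lemma Hfun_mono {v : ℕ → ℝ} {c : ℝ} (hv : ∀ i, 0 ≤ v i) : Monotone (Hfun v c) := by
  apply monotone_nat_of_le_succ
  intro k
  apply Real.sqrt_le_sqrt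
  rw [Finset.sum_range_succ]
  have := hv k
  linarith

lemma Hfun_step {v : ℕ → ℝ} {c : ℝ} (hv : ∀ i, 0 ≤ v i) (hc : 0 < c)
    (hvc : ∀ i, v i ≤ c) (k : ℕ) : Hfun v c (k+1) ≤ Real.sqrt 2 * Hfun v c k := by
  have hsqrt2sq : (Real.sqrt 2) ^ 2 = 2 := Real.sq_sqrt (by norm_num)
  have h1 : (Hfun v c (k+1)) ^ 2 ≤ (Real.sqrt 2 * Hfun v c k) ^ 2 := by
    rw [Hfun_succ hv (le_of_lt hc), mul_pow, hsqrt2sq]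
    have := hvc k
    have := Hfun_c_le hv (le_of_lt hc) k
    linarith
  have h2 : 0 ≤ Real.sqrt 2 * Hfun v c k :=
    mul_nonneg (Real.sqrt_nonneg 2) (le_of_lt (Hfun_pos hv hc k))
  exact (pow_le_pow_iff_left₀ (le_of_lt (Hfun_pos hv hc (k+1))) h2 (by norm_num)).1 h1

lemma Hfun_tel {v : ℕ → ℝ} {c : ℝ} (hv : ∀ i, 0 ≤ v i) (hc : 0 < c)
    (hvc : ∀ i, v i ≤ c) (t : ℕ) :
    ∑ k ∈ Finset.range t, v k / Hfun v c k ≤ 2 * Real.sqrt 2 * Hfun v c t := by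
  have hsqrt2sq : (Real.sqrt 2) ^ 2 = 2 := Real.sq_sqrt (by norm_num)
  have hsqrt2pos : 0 < Real.sqrt 2 := Real.sqrt_pos.2 (by norm_num)
  have htel : ∀ k, v k / Hfun v c k ≤ 2 * Real.sqrt 2 * (Hfun v c (k+1) - Hfun v c k) := by
    intro k
    have hdiff : 0 ≤ Hfun v c (k+1) - Hfun v c k := by
      have := Hfun_mono (c := c) hv (Nat.le_succ k); linarith
    have hprod : (Hfun v c (k+1) - Hfun v c k) * (Hfun v c (k+1) + Hfun v c k) = v k := by
      have := Hfun_succ hv (le_of_lt hc) k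
      nlinarith [this]
    have hsumle : Hfun v c (k+1) + Hfun v c k ≤ 2 * Real.sqrt 2 * Hfun v c k := by
      have h1 := Hfun_step hv hc hvc k
      have h2 := Hfun_pos hv hc k
      nlinarith
    rw [div_le_iff₀ (Hfun_pos hv hc k)]
    calc v k = (Hfun v c (k+1) - Hfun v c k) * (Hfun v c (k+1) + Hfun v c k) := hprod.symm
      _ ≤ (Hfun v c (k+1) - Hfun v c k) * (2 * Real.sqrt 2 * Hfun v c k) :=
          mul_le_mul_of_nonneg_left hsumle hdiff
      _ = 2 * Real.sqrt 2 * (Hfun v c (k+1) - Hfun v c k) * Hfun v c k := by ring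
  calc ∑ k ∈ Finset.range t, v k / Hfun v c k
      ≤ ∑ k ∈ Finset.range t, 2 * Real.sqrt 2 * (Hfun v c (k+1) - Hfun v c k) :=
        Finset.sum_le_sum fun k _ => htel k
    _ = 2 * Real.sqrt 2 * ∑ k ∈ Finset.range t, (Hfun v c (k+1) - Hfun v c k) := by
        rw [Finset.mul_sum]
    _ = 2 * Real.sqrt 2 * (Hfun v c t - Hfun v c 0) := by rw [Finset.sum_range_sub]
    _ ≤ 2 * Real.sqrt 2 * Hfun v c t := by
        nlinarith [Hfun_pos hv hc 0, Hfun_pos hv hc t]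

end Aux

set_option maxHeartbeats 4000000 in
theorem stmt19 (d : ℕ) (hd : 1 ≤ d) (L Lbar : ℝ) (hL : 0 < L) (hLLbar : L ≤ Lbar)
    (θ : ℝ) (hθ : 1 ≤ θ)
    (X : Set (EuclideanSpace ℝ (Fin d))) (hXne : X.Nonempty) (hXcl : IsClosed X)
    (hXconv : Convex ℝ X)
    (f : EuclideanSpace ℝ (Fin d) → ℝ)
    (hconv : ConvexOn ℝ Set.univ f)
    (hlip : ∀ x y, |f x - f y| ≤ L * ‖x - y‖)
    -- `proj` is the Euclidean metric projection onto `X`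
    (proj : EuclideanSpace ℝ (Fin d) → EuclideanSpace ℝ (Fin d))
    (hprojMem : ∀ z, proj z ∈ X)
    (hprojMin : ∀ z, ∀ y ∈ X, ‖z - proj z‖ ≤ ‖z - y‖)
    (x : ℕ → EuclideanSpace ℝ (Fin d)) (xstar : EuclideanSpace ℝ (Fin d))
    (hx0 : x 0 ∈ X) (hxstar : xstar ∈ X)
    (reps : ℝ) (hreps : 0 < reps)
    (g : ℕ → EuclideanSpace ℝ (Fin d)) (hgbdd : ∀ k, ‖g k‖ ≤ L * d)
    (rbar : ℕ → ℝ)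
    (hrbar : ∀ k, rbar k = max reps ((Finset.range (k + 1)).sup' Finset.nonempty_range_add_one
      fun j => ‖x j - x 0‖))
    (G : ℕ → ℝ) (hG : ∀ k, G k = ∑ i ∈ Finset.range (k + 1), ‖g i‖ ^ 2)
    (G' : ℕ → ℝ)
    (hG' : ∀ k : ℕ, G' k = 8 ^ 4 * θ * (Real.log ((k : ℝ) + 2) + 1) ^ 2 *
      ((∑ i ∈ Finset.range k, ‖g i‖ ^ 2) + 16 * θ * (d : ℝ) ^ 2 * Lbar ^ 2))
    (η : ℕ → ℝ) (hη : ∀ k, η k = rbar k / Real.sqrt (G' k))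
    (μ : ℕ → ℝ) (hμ : ∀ k : ℕ, μ k = (d : ℝ) * rbar k / ((k : ℝ) + 1) ^ 2)
    (hrec : ∀ k, x (k + 1) = proj (x k - η k • g k))
    (sbar : ℕ → ℝ)
    (hsbar : ∀ k, sbar k = (Finset.range (k + 1)).sup' Finset.nonempty_range_add_one
      fun j => ‖x j - xstar‖)
    (t : ℕ) (ht : 1 ≤ t)
    (xbar : EuclideanSpace ℝ (Fin d))
    (hxbar : xbar = (∑ k ∈ Finset.range t, rbar k)⁻¹ •
      ∑ k ∈ Finset.range t, rbar k • x k)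
    (hnoise : |∑ k ∈ Finset.range t,
        rbar k * ⟪gradient (smoothed d f (μ k)) (x k) - g k, x k - xstar⟫| ≤
      8 * rbar (t - 1) * sbar (t - 1) *
        Real.sqrt (θ * G (t - 1) + 4 * L ^ 2 * (d : ℝ) ^ 2 * θ ^ 2)) :
    f xbar - f xstar ≤
      20 * θ * (rbar t + ‖x 0 - xstar‖) * (Real.sqrt (G' (t - 1)) + L * d) /
      (∑ k ∈ Finset.range t, rbar k / rbar t) := by
  classical
  have hLbarpos : 0 < Lbar := lt_of_lt_of_le hL hLLbar
  have hdR : (1:ℝ) ≤ (d:ℝ) := by exact_mod_cast hd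
  have hdpos : (0:ℝ) < (d:ℝ) := lt_of_lt_of_le one_pos hdR
  have hL0 : (0:ℝ) ≤ L := le_of_lt hL
  have hθ0 : (0:ℝ) < θ := lt_of_lt_of_le one_pos hθ
  have ht1 : t - 1 + 1 = t := by omega
  have hflip : LipschitzWith (Real.toNNReal L) f := by
    apply LipschitzWith.of_dist_le_mul
    intro a b
    rw [Real.coe_toNNReal _ hL0]
    simpa [dist_eq_norm] using hlip a b
  have hfcont : Continuous f := hflip.continuous
  -- rbar facts
  have hrbar_ge_reps : ∀ k, reps ≤ rbar k := fun k => by rw [hrbar]; exact le_max_left _ _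
  have hrbar_pos : ∀ k, 0 < rbar k := fun k => lt_of_lt_of_le hreps (hrbar_ge_reps k)
  have hrbar_ge : ∀ k, ‖x k - x 0‖ ≤ rbar k := fun k => by
    rw [hrbar]
    exact le_trans (Finset.le_sup' (fun j => ‖x j - x 0‖) (Finset.self_mem_range_succ k))
      (le_max_right _ _)
  have hrbar_mono : Monotone rbar := by
    apply monotone_nat_of_le_succ
    intro k
    rw [hrbar k, hrbar (k+1)]
    apply max_le (le_max_left _ _)
    apply Finset.sup'_le
    intro j hj
    refine le_trans (Finset.le_sup' (fun j => ‖x j - x 0‖) ?_) (le_max_right _ _)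
    exact Finset.mem_range.2 (lt_trans (Finset.mem_range.1 hj) (Nat.lt_succ_self _))
  have hd0 : (0:ℝ) ≤ ‖x 0 - xstar‖ := norm_nonneg _
  have hD_near : ∀ k, |‖x k - xstar‖ - ‖x 0 - xstar‖| ≤ rbar k := by
    intro k
    have h1 : |‖x k - xstar‖ - ‖x 0 - xstar‖| ≤ ‖(x k - xstar) - (x 0 - xstar)‖ :=
      abs_norm_sub_norm_le _ _
    have h2 : (x k - xstar) - (x 0 - xstar) = x k - x 0 := by abel
    rw [h2] at h1
    exact le_trans h1 (hrbar_ge k)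
  have hD_le : ∀ k, ‖x k - xstar‖ ≤ ‖x 0 - xstar‖ + rbar k := fun k => by
    have := (abs_le.1 (hD_near k)).2; linarith
  -- c and (Hfun (fun i => ‖g i‖ ^ 2) c)
  set c : ℝ := 16 * θ * (d : ℝ) ^ 2 * Lbar ^ 2 with hcdef
  have hcpos : 0 < c := by positivity
  have hgsq : ∀ k, ‖g k‖ ^ 2 ≤ c := by
    intro k
    have h1 : ‖g k‖ ^ 2 ≤ (L * d) ^ 2 := by
      have := hgbdd k
      nlinarith [norm_nonneg (g k)]
    have hL2 : L ^ 2 ≤ Lbar ^ 2 := by nlinarith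
    have h2 : (L * (d:ℝ)) ^ 2 ≤ c := by
      rw [hcdef]
      have hd2 : (0:ℝ) < (d:ℝ) ^ 2 := by positivity
      calc (L * (d:ℝ)) ^ 2 = L ^ 2 * (d:ℝ) ^ 2 := by ring
        _ ≤ Lbar ^ 2 * (d:ℝ) ^ 2 := by nlinarith
        _ ≤ 16 * θ * (d:ℝ) ^ 2 * Lbar ^ 2 := by nlinarith [sq_nonneg Lbar]
    linarith
  have hv : ∀ i : ℕ, (0:ℝ) ≤ ‖g i‖ ^ 2 := fun i => sq_nonneg _
  have hsum0 : ∀ k, (0:ℝ) ≤ ∑ i ∈ Finset.range k, ‖g i‖ ^ 2 := fun k =>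
    Finset.sum_nonneg fun i _ => sq_nonneg _
  have hHsq : ∀ k, ((Hfun (fun i => ‖g i‖ ^ 2) c) k) ^ 2 = (∑ i ∈ Finset.range k, ‖g i‖ ^ 2) + c := fun k =>
    Hfun_sq hv (le_of_lt hcpos) k
  have hHpos : ∀ k, 0 < (Hfun (fun i => ‖g i‖ ^ 2) c) k := fun k => Hfun_pos hv hcpos k
  have hHc : ∀ k, c ≤ ((Hfun (fun i => ‖g i‖ ^ 2) c) k) ^ 2 := fun k => Hfun_c_le hv (le_of_lt hcpos) k
  have hHmono : Monotone (Hfun (fun i => ‖g i‖ ^ 2) c) := Hfun_mono hv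
  have hsqrt2sq : (Real.sqrt 2) ^ 2 = 2 := Real.sq_sqrt (by norm_num)
  have hsqrt2pos : 0 < Real.sqrt 2 := Real.sqrt_pos.2 (by norm_num)
  have hsqrt2le : Real.sqrt 2 ≤ 2 := by nlinarith
  have hsqrt2ge : 1 ≤ Real.sqrt 2 := by nlinarith
  have hHstep : ∀ k, (Hfun (fun i => ‖g i‖ ^ 2) c) (k+1) ≤ Real.sqrt 2 * (Hfun (fun i => ‖g i‖ ^ 2) c) k := fun k => Hfun_step hv hcpos hgsq k
  -- log and G'
  have hlog : ∀ k : ℕ, 1 ≤ (Real.log ((k:ℝ) + 2) + 1) ^ 2 := by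
    intro k
    have h1 : 0 ≤ Real.log ((k:ℝ) + 2) :=
      Real.log_nonneg (by have : (0:ℝ) ≤ (k:ℝ) := Nat.cast_nonneg k; linarith)
    nlinarith
  have hG'ge : ∀ k, 4096 * θ * ((Hfun (fun i => ‖g i‖ ^ 2) c) k) ^ 2 ≤ G' k := by
    intro k
    rw [hG' k, show (∑ i ∈ Finset.range k, ‖g i‖ ^ 2) + 16 * θ * (d : ℝ) ^ 2 * Lbar ^ 2
      = ((Hfun (fun i => ‖g i‖ ^ 2) c) k) ^ 2 from (hHsq k).symm]
    have h84 : (8:ℝ) ^ 4 = 4096 := by norm_num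
    rw [h84]
    have key : 0 ≤ θ * ((Real.log ((k:ℝ) + 2) + 1) ^ 2 - 1) * ((Hfun (fun i => ‖g i‖ ^ 2) c) k) ^ 2 :=
      mul_nonneg (mul_nonneg (le_of_lt hθ0) (by linarith [hlog k])) (sq_nonneg _)
    nlinarith [key]
  have hG'pos : ∀ k, 0 < G' k := fun k =>
    lt_of_lt_of_le (by nlinarith [hHpos k, hHc k]) (hG'ge k)
  have hSpos : ∀ k, 0 < Real.sqrt (G' k) := fun k => Real.sqrt_pos.2 (hG'pos k)
  have hsqrtθ1 : 1 ≤ Real.sqrt θ := by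
    rw [show (1:ℝ) = Real.sqrt 1 by simp]
    exact Real.sqrt_le_sqrt hθ
  have hsqrtθ0 : 0 < Real.sqrt θ := lt_of_lt_of_le one_pos hsqrtθ1
  have hSge : ∀ k, 64 * Real.sqrt θ * (Hfun (fun i => ‖g i‖ ^ 2) c) k ≤ Real.sqrt (G' k) := by
    intro k
    have h1 : (64 * Real.sqrt θ * (Hfun (fun i => ‖g i‖ ^ 2) c) k) ^ 2 ≤ G' k := by
      have he : (64 * Real.sqrt θ * (Hfun (fun i => ‖g i‖ ^ 2) c) k) ^ 2 = 4096 * θ * ((Hfun (fun i => ‖g i‖ ^ 2) c) k) ^ 2 := by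
        rw [mul_pow, mul_pow, Real.sq_sqrt (le_of_lt hθ0)]; ring
      rw [he]; exact hG'ge k
    have hnn : (0:ℝ) ≤ 64 * Real.sqrt θ * (Hfun (fun i => ‖g i‖ ^ 2) c) k :=
      mul_nonneg (mul_nonneg (by norm_num) (Real.sqrt_nonneg θ)) (le_of_lt (hHpos k))
    calc 64 * Real.sqrt θ * (Hfun (fun i => ‖g i‖ ^ 2) c) k = Real.sqrt ((64 * Real.sqrt θ * (Hfun (fun i => ‖g i‖ ^ 2) c) k) ^ 2) :=
          (Real.sqrt_sq hnn).symm
      _ ≤ Real.sqrt (G' k) := Real.sqrt_le_sqrt h1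
  have hSge' : ∀ k, 64 * (Hfun (fun i => ‖g i‖ ^ 2) c) k ≤ Real.sqrt (G' k) := by
    intro k
    refine le_trans ?_ (hSge k)
    nlinarith [mul_nonneg (sub_nonneg.2 hsqrtθ1) (le_of_lt (hHpos k))]
  have hSmono : ∀ j k, j ≤ k → Real.sqrt (G' j) ≤ Real.sqrt (G' k) := by
    have hmono : Monotone fun k => Real.sqrt (G' k) := by
      apply monotone_nat_of_le_succ
      intro k
      apply Real.sqrt_le_sqrt
      rw [hG' k, hG' (k+1)]
      push_cast
      have hl1 : 0 ≤ Real.log ((k:ℝ) + 2) :=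
        Real.log_nonneg (by have : (0:ℝ) ≤ (k:ℝ) := Nat.cast_nonneg k; linarith)
      have hl2 : Real.log ((k:ℝ) + 2) ≤ Real.log ((k:ℝ) + 1 + 2) := by
        apply Real.log_le_log (by positivity)
        push_cast
        linarith
      have hs1 : (∑ i ∈ Finset.range k, ‖g i‖ ^ 2) ≤ ∑ i ∈ Finset.range (k+1), ‖g i‖ ^ 2 := by
        rw [Finset.sum_range_succ]; nlinarith [sq_nonneg ‖g k‖]
      have hc0 : (0:ℝ) ≤ 16 * θ * (d : ℝ) ^ 2 * Lbar ^ 2 := by positivity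
      have h84 : (0:ℝ) < 8 ^ 4 * θ := by positivity
      have hll : (Real.log ((k:ℝ) + 2) + 1) ^ 2 ≤ (Real.log ((k:ℝ) + 1 + 2) + 1) ^ 2 := by
        nlinarith
      have hsum' : (0:ℝ) ≤ (∑ i ∈ Finset.range k, ‖g i‖ ^ 2) + c := by
        have := hsum0 k; linarith
      have hsum'' : (0:ℝ) ≤ (∑ i ∈ Finset.range (k+1), ‖g i‖ ^ 2) + c := by
        have := hsum0 (k+1); linarith
      calc 8 ^ 4 * θ * (Real.log ((k:ℝ) + 2) + 1) ^ 2 * ((∑ i ∈ Finset.range k, ‖g i‖ ^ 2) + c)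
          ≤ 8 ^ 4 * θ * (Real.log ((k:ℝ) + 2) + 1) ^ 2 *
            ((∑ i ∈ Finset.range (k+1), ‖g i‖ ^ 2) + c) := by
            apply mul_le_mul_of_nonneg_left (by linarith) (by positivity)
        _ ≤ 8 ^ 4 * θ * (Real.log ((k:ℝ) + 1 + 2) + 1) ^ 2 *
            ((∑ i ∈ Finset.range (k+1), ‖g i‖ ^ 2) + c) := by
            apply mul_le_mul_of_nonneg_right _ hsum''
            apply mul_le_mul_of_nonneg_left hll (by positivity)
    exact fun j k h => hmono h
  -- eta, mu
  have hηpos : ∀ k, 0 < η k := fun k => by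
    rw [hη]; exact div_pos (hrbar_pos k) (hSpos k)
  have hμpos : ∀ k, 0 < μ k := fun k => by
    rw [hμ]
    apply div_pos (mul_pos hdpos (hrbar_pos k))
    positivity
  -- per-step descent
  have hDrec : ∀ k, (‖x (k+1) - xstar‖) ^ 2 ≤ (‖x k - xstar‖) ^ 2
      - 2 * (η k) * ⟪g k, x k - xstar⟫ + (η k) ^ 2 * ‖g k‖ ^ 2 := by
    intro k
    have h1 : ‖x (k+1) - xstar‖ ≤ ‖(x k - η k • g k) - xstar‖ := by
      rw [hrec k]
      exact proj_nonexpansive hXconv proj hprojMem hprojMin _ hxstar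
    have h2 : ‖(x k - η k • g k) - xstar‖ ^ 2 = (‖x k - xstar‖) ^ 2
        - 2 * (η k) * ⟪g k, x k - xstar⟫ + (η k) ^ 2 * ‖g k‖ ^ 2 := by
      have he : (x k - η k • g k) - xstar = (x k - xstar) - η k • g k := by abel
      have hns : ‖η k • g k‖ ^ 2 = (η k) ^ 2 * ‖g k‖ ^ 2 := by
        rw [norm_smul, mul_pow, Real.norm_eq_abs, sq_abs]
      have hin : ⟪x k - xstar, η k • g k⟫ = η k * ⟪g k, x k - xstar⟫ := by
        rw [real_inner_smul_right, real_inner_comm]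
      rw [he, norm_sub_sq_real, hns, hin]
      ring
    have h3 : ‖x (k+1) - xstar‖ ^ 2 ≤ ‖(x k - η k • g k) - xstar‖ ^ 2 :=
      pow_le_pow_left₀ (norm_nonneg _) h1 2
    rw [h2] at h3
    exact h3
  have hgstep : ∀ k, rbar k * ⟪g k, x k - xstar⟫ ≤
      Real.sqrt (G' k) / 2 * ((‖x k - xstar‖) ^ 2 - (‖x (k+1) - xstar‖) ^ 2)
      + rbar k ^ 2 * ‖g k‖ ^ 2 / (2 * Real.sqrt (G' k)) := by
    intro k
    have h0 := hDrec k
    have hS := hSpos k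
    have hr := hrbar_pos k
    rw [hη] at h0
    have h1 : 2 * (rbar k / Real.sqrt (G' k)) * ⟪g k, x k - xstar⟫ ≤
        (‖x k - xstar‖) ^ 2 - (‖x (k+1) - xstar‖) ^ 2
        + (rbar k / Real.sqrt (G' k)) ^ 2 * ‖g k‖ ^ 2 := by linarith
    have h2 := mul_le_mul_of_nonneg_left h1 (le_of_lt (half_pos hS))
    calc rbar k * ⟪g k, x k - xstar⟫
        = Real.sqrt (G' k) / 2 * (2 * (rbar k / Real.sqrt (G' k)) * ⟪g k, x k - xstar⟫) := by
          field_simp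
      _ ≤ Real.sqrt (G' k) / 2 * ((‖x k - xstar‖) ^ 2 - (‖x (k+1) - xstar‖) ^ 2
          + (rbar k / Real.sqrt (G' k)) ^ 2 * ‖g k‖ ^ 2) := h2
      _ = Real.sqrt (G' k) / 2 * ((‖x k - xstar‖) ^ 2 - (‖x (k+1) - xstar‖) ^ 2)
          + rbar k ^ 2 * ‖g k‖ ^ 2 / (2 * Real.sqrt (G' k)) := by
          field_simp
  -- per-step f inequality
  have hfstep : ∀ k, f (x k) - f xstar ≤ ⟪g k, x k - xstar⟫
      + ⟪gradient (smoothed d f (μ k)) (x k) - g k, x k - xstar⟫ + 2 * L * (μ k) := by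
    intro k
    have hμk := hμpos k
    have h1 := smoothed_close f hlip hL0 (le_of_lt hμk) hfcont (x k)
    have h2 := smoothed_close f hlip hL0 (le_of_lt hμk) hfcont xstar
    have h3 := convex_grad_ineq (smoothed d f (μ k)) (smoothed_convexOn f hconv hfcont (μ k))
      (smoothed_differentiableAt f hflip (ne_of_gt hμk) (x k)) xstar
    have h4 : ⟪gradient (smoothed d f (μ k)) (x k), x k - xstar⟫ =
        ⟪g k, x k - xstar⟫ + ⟪gradient (smoothed d f (μ k)) (x k) - g k, x k - xstar⟫ := by
      rw [inner_sub_left]; ring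
    rw [h4] at h3
    have h5 := (abs_le.1 h1).1
    have h6 := (abs_le.1 h2).2
    linarith
  -- combined per-step
  have hPk : ∀ k, rbar k * (f (x k) - f xstar) ≤
      Real.sqrt (G' k) / 2 * ((‖x k - xstar‖) ^ 2 - (‖x (k+1) - xstar‖) ^ 2)
      + rbar k ^ 2 * ‖g k‖ ^ 2 / (2 * Real.sqrt (G' k))
      + rbar k * ⟪gradient (smoothed d f (μ k)) (x k) - g k, x k - xstar⟫
      + rbar k * (2 * L * (μ k)) := by
    intro k
    have h1 := mul_le_mul_of_nonneg_left (hfstep k) (le_of_lt (hrbar_pos k))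
    rw [mul_add, mul_add] at h1
    have h2 := hgstep k
    linarith
  have hsum1 : ∑ k ∈ Finset.range t, rbar k * (f (x k) - f xstar) ≤
      (∑ k ∈ Finset.range t,
        Real.sqrt (G' k) / 2 * ((‖x k - xstar‖) ^ 2 - (‖x (k+1) - xstar‖) ^ 2))
      + (∑ k ∈ Finset.range t, rbar k ^ 2 * ‖g k‖ ^ 2 / (2 * Real.sqrt (G' k)))
      + (∑ k ∈ Finset.range t,
          rbar k * ⟪gradient (smoothed d f (μ k)) (x k) - g k, x k - xstar⟫)
      + (∑ k ∈ Finset.range t, rbar k * (2 * L * (μ k))) := by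
    rw [← Finset.sum_add_distrib, ← Finset.sum_add_distrib, ← Finset.sum_add_distrib]
    exact Finset.sum_le_sum fun k _ => hPk k
  -- T1
  have hT1 : ∑ k ∈ Finset.range t,
      Real.sqrt (G' k) / 2 * ((‖x k - xstar‖) ^ 2 - (‖x (k+1) - xstar‖) ^ 2) ≤
      2 * Real.sqrt (G' (t-1)) * (rbar t * (‖x 0 - xstar‖ + rbar t)) := by
    set b : ℕ → ℝ := fun k => (‖x k - xstar‖) ^ 2 - (‖x 0 - xstar‖) ^ 2 with hbdef
    have hb : ∀ k ≤ t, |b k| ≤ rbar t * (2 * ‖x 0 - xstar‖ + rbar t) := by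
      intro k hk
      have h1 : b k = (‖x k - xstar‖ - ‖x 0 - xstar‖) * (‖x k - xstar‖ + ‖x 0 - xstar‖) := by
        rw [hbdef]; ring
      have h2 : |b k| = |‖x k - xstar‖ - ‖x 0 - xstar‖| * (‖x k - xstar‖ + ‖x 0 - xstar‖) := by
        have habs : |‖x k - xstar‖ + ‖x 0 - xstar‖| = ‖x k - xstar‖ + ‖x 0 - xstar‖ :=
          abs_of_nonneg (by positivity)
        rw [h1, abs_mul, habs]
      rw [h2]
      have h3 : |‖x k - xstar‖ - ‖x 0 - xstar‖| ≤ rbar t := le_trans (hD_near k) (hrbar_mono hk)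
      have h4 : ‖x k - xstar‖ + ‖x 0 - xstar‖ ≤ 2 * ‖x 0 - xstar‖ + rbar t := by
        have h5 := hD_le k
        have h6 := hrbar_mono hk
        linarith
      exact mul_le_mul h3 h4 (by positivity) (le_of_lt (hrbar_pos t))
    have hmonoS : Monotone fun k => Real.sqrt (G' k) / 2 := by
      intro i j hij
      have := hSmono i j hij
      simp only
      linarith
    have habel := abel_bound (fun k => Real.sqrt (G' k) / 2) b
      (rbar t * (2 * ‖x 0 - xstar‖ + rbar t)) (by positivity) hmonoS t ht hb
    have hmatch : ∀ k ∈ Finset.range t, Real.sqrt (G' k) / 2 * (b k - b (k + 1)) =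
        Real.sqrt (G' k) / 2 * ((‖x k - xstar‖) ^ 2 - (‖x (k+1) - xstar‖) ^ 2) := by
      intro k _
      rw [hbdef]
      ring
    rw [Finset.sum_congr rfl hmatch] at habel
    have hbt := (abs_le.1 (hb t le_rfl)).1
    have hSt := hSpos (t-1)
    have hfin : Real.sqrt (G' (t-1)) / 2 * ((rbar t * (2 * ‖x 0 - xstar‖ + rbar t)) - b t) ≤
        2 * Real.sqrt (G' (t-1)) * (rbar t * (‖x 0 - xstar‖ + rbar t)) := by
      have hB : (rbar t * (2 * ‖x 0 - xstar‖ + rbar t)) - b t ≤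
          2 * (rbar t * (2 * ‖x 0 - xstar‖ + rbar t)) := by linarith
      calc Real.sqrt (G' (t-1)) / 2 * ((rbar t * (2 * ‖x 0 - xstar‖ + rbar t)) - b t)
          ≤ Real.sqrt (G' (t-1)) / 2 * (2 * (rbar t * (2 * ‖x 0 - xstar‖ + rbar t))) :=
            mul_le_mul_of_nonneg_left hB (by positivity)
        _ = Real.sqrt (G' (t-1)) * (rbar t * (2 * ‖x 0 - xstar‖ + rbar t)) := by ring
        _ ≤ 2 * Real.sqrt (G' (t-1)) * (rbar t * (‖x 0 - xstar‖ + rbar t)) := by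
            have hkey : 0 ≤ Real.sqrt (G' (t-1)) * (rbar t * rbar t) :=
              mul_nonneg (le_of_lt hSt) (mul_nonneg (le_of_lt (hrbar_pos t)) (le_of_lt (hrbar_pos t)))
            nlinarith [hkey]
    exact le_trans habel hfin
  have hsumtel : ∑ k ∈ Finset.range t, ‖g k‖ ^ 2 / (Hfun (fun i => ‖g i‖ ^ 2) c) k ≤ 2 * Real.sqrt 2 * (Hfun (fun i => ‖g i‖ ^ 2) c) t :=
    Hfun_tel hv hcpos hgsq t
  -- T2
  have hT2 : ∑ k ∈ Finset.range t, rbar k ^ 2 * ‖g k‖ ^ 2 / (2 * Real.sqrt (G' k)) ≤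
      Real.sqrt (G' (t-1)) * (rbar t * (‖x 0 - xstar‖ + rbar t)) := by
    have hstep2 : ∀ k ∈ Finset.range t, rbar k ^ 2 * ‖g k‖ ^ 2 / (2 * Real.sqrt (G' k)) ≤
        rbar (t-1) ^ 2 / 128 * (‖g k‖ ^ 2 / (Hfun (fun i => ‖g i‖ ^ 2) c) k) := by
      intro k hk
      have hk' : k ≤ t - 1 := by
        have := Finset.mem_range.1 hk; omega
      have h1 : rbar k ≤ rbar (t-1) := hrbar_mono hk'
      have heq : rbar (t-1) ^ 2 / 128 * (‖g k‖ ^ 2 / (Hfun (fun i => ‖g i‖ ^ 2) c) k) =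
          rbar (t-1) ^ 2 * ‖g k‖ ^ 2 / (128 * (Hfun (fun i => ‖g i‖ ^ 2) c) k) := by
        field_simp
      rw [heq]
      apply div_le_div₀ (by positivity)
      · have hsq' : rbar k ^ 2 ≤ rbar (t-1) ^ 2 := by
          nlinarith [mul_le_mul h1 h1 (le_of_lt (hrbar_pos k)) (le_of_lt (hrbar_pos (t-1)))]
        exact mul_le_mul_of_nonneg_right hsq' (sq_nonneg _)
      · exact mul_pos (by norm_num) (hHpos k)
      · have := hSge' k
        linarith
    calc ∑ k ∈ Finset.range t, rbar k ^ 2 * ‖g k‖ ^ 2 / (2 * Real.sqrt (G' k))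
        ≤ ∑ k ∈ Finset.range t, rbar (t-1) ^ 2 / 128 * (‖g k‖ ^ 2 / (Hfun (fun i => ‖g i‖ ^ 2) c) k) :=
          Finset.sum_le_sum hstep2
      _ = rbar (t-1) ^ 2 / 128 * ∑ k ∈ Finset.range t, ‖g k‖ ^ 2 / (Hfun (fun i => ‖g i‖ ^ 2) c) k := by
          rw [Finset.mul_sum]
      _ ≤ rbar (t-1) ^ 2 / 128 * (2 * Real.sqrt 2 * (Hfun (fun i => ‖g i‖ ^ 2) c) t) := by
          apply mul_le_mul_of_nonneg_left hsumtel (by positivity)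
      _ ≤ rbar (t-1) ^ 2 / 128 * (2 * Real.sqrt 2 * (Real.sqrt 2 * (Hfun (fun i => ‖g i‖ ^ 2) c) (t-1))) := by
          have h1 : (Hfun (fun i => ‖g i‖ ^ 2) c) t ≤ Real.sqrt 2 * (Hfun (fun i => ‖g i‖ ^ 2) c) (t-1) := by
            have := hHstep (t-1); rwa [ht1] at this
          have h2s : (0:ℝ) ≤ 2 * Real.sqrt 2 := by positivity
          exact mul_le_mul_of_nonneg_left (mul_le_mul_of_nonneg_left h1 h2s) (by positivity)
      _ = rbar (t-1) ^ 2 * (Hfun (fun i => ‖g i‖ ^ 2) c) (t-1) / 32 := by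
          have he2 : Real.sqrt 2 * Real.sqrt 2 = 2 := Real.mul_self_sqrt (by norm_num)
          linear_combination (rbar (t-1) ^ 2 * (Hfun (fun i => ‖g i‖ ^ 2) c) (t-1) / 64) * he2
      _ ≤ Real.sqrt (G' (t-1)) * (rbar t * (‖x 0 - xstar‖ + rbar t)) := by
          have h2 : 64 * (Hfun (fun i => ‖g i‖ ^ 2) c) (t-1) ≤ Real.sqrt (G' (t-1)) := hSge' (t-1)
          have h3 : rbar (t-1) ≤ rbar t := hrbar_mono (by omega)
          have h4 := hrbar_pos (t-1)
          have h5 := hrbar_pos t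
          have h6 := hHpos (t-1)
          have e1 : rbar (t-1) ^ 2 ≤ rbar t * (‖x 0 - xstar‖ + rbar t) := by
            nlinarith [mul_le_mul h3 h3 (le_of_lt h4) (le_of_lt h5), hd0]
          have e2 : (Hfun (fun i => ‖g i‖ ^ 2) c) (t-1) ≤ Real.sqrt (G' (t-1)) / 64 := by linarith
          have hYnn : (0:ℝ) ≤ rbar t * (‖x 0 - xstar‖ + rbar t) :=
            mul_nonneg (le_of_lt h5) (by linarith [hd0])
          nlinarith [mul_le_mul e1 e2 (le_of_lt h6) hYnn,
            mul_nonneg hYnn (le_of_lt (hSpos (t-1)))]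
  -- T3
  have hT3 : ∑ k ∈ Finset.range t,
      rbar k * ⟪gradient (smoothed d f (μ k)) (x k) - g k, x k - xstar⟫ ≤
      Real.sqrt (G' (t-1)) * (rbar t * (‖x 0 - xstar‖ + rbar t)) := by
    have h0 := le_trans (le_abs_self _) hnoise
    have hGt : G (t-1) = ((Hfun (fun i => ‖g i‖ ^ 2) c) t) ^ 2 - c := by
      rw [hG, hHsq, ht1]; ring
    have hins : θ * G (t-1) + 4 * L ^ 2 * (d:ℝ) ^ 2 * θ ^ 2 ≤ 2 * θ * ((Hfun (fun i => ‖g i‖ ^ 2) c) (t-1)) ^ 2 := by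
      have h1 : ((Hfun (fun i => ‖g i‖ ^ 2) c) t) ^ 2 ≤ 2 * ((Hfun (fun i => ‖g i‖ ^ 2) c) (t-1)) ^ 2 := by
        have hh := hHstep (t-1)
        rw [ht1] at hh
        nlinarith [mul_le_mul hh hh (le_of_lt (hHpos t))
          (mul_nonneg (Real.sqrt_nonneg 2) (le_of_lt (hHpos (t-1)))), hsqrt2sq]
      rw [hGt]
      have hL2 : L ^ 2 ≤ Lbar ^ 2 := by nlinarith
      have h2 : 4 * L ^ 2 * (d:ℝ) ^ 2 * θ ^ 2 ≤ θ * c := by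
        rw [hcdef]
        nlinarith [mul_nonneg (mul_nonneg (sq_nonneg ((d:ℝ))) (sq_nonneg θ))
          (show (0:ℝ) ≤ 4 * Lbar ^ 2 - L ^ 2 by nlinarith [hL2, sq_nonneg Lbar])]
      nlinarith [mul_le_mul_of_nonneg_left h1 (le_of_lt hθ0), h2]
    have hsq : Real.sqrt (θ * G (t-1) + 4 * L ^ 2 * (d:ℝ) ^ 2 * θ ^ 2) ≤
        Real.sqrt 2 * (Real.sqrt θ * (Hfun (fun i => ‖g i‖ ^ 2) c) (t-1)) := by
      calc Real.sqrt (θ * G (t-1) + 4 * L ^ 2 * (d:ℝ) ^ 2 * θ ^ 2)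
          ≤ Real.sqrt (2 * θ * ((Hfun (fun i => ‖g i‖ ^ 2) c) (t-1)) ^ 2) := Real.sqrt_le_sqrt hins
        _ = Real.sqrt 2 * (Real.sqrt θ * (Hfun (fun i => ‖g i‖ ^ 2) c) (t-1)) := by
            rw [show 2 * θ * ((Hfun (fun i => ‖g i‖ ^ 2) c) (t-1)) ^ 2 = 2 * (θ * ((Hfun (fun i => ‖g i‖ ^ 2) c) (t-1)) ^ 2) by ring,
              Real.sqrt_mul (by norm_num), Real.sqrt_mul (le_of_lt hθ0),
              Real.sqrt_sq (le_of_lt (hHpos _))]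
    have hsbarle : sbar (t-1) ≤ ‖x 0 - xstar‖ + rbar (t-1) := by
      rw [hsbar]
      apply Finset.sup'_le
      intro j hj
      have hj' : j ≤ t - 1 := by
        have := Finset.mem_range.1 hj; omega
      have h8 : ‖x j - xstar‖ ≤ ‖x j - x 0‖ + ‖x 0 - xstar‖ := by
        have he : x j - xstar = (x j - x 0) + (x 0 - xstar) := by abel
        rw [he]; exact norm_add_le _ _
      have h9 := hrbar_ge j
      have h10 := hrbar_mono hj'
      linarith
    have hsbar0 : 0 ≤ sbar (t-1) := by
      rw [hsbar]
      refine le_trans (norm_nonneg (x 0 - xstar)) ?_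
      exact Finset.le_sup' (fun j => ‖x j - xstar‖) (Finset.mem_range.2 (by omega))
    have hsqnn : 0 ≤ Real.sqrt (θ * G (t-1) + 4 * L ^ 2 * (d:ℝ) ^ 2 * θ ^ 2) :=
      Real.sqrt_nonneg _
    have h11 : 8 * rbar (t-1) * sbar (t-1) *
        Real.sqrt (θ * G (t-1) + 4 * L ^ 2 * (d:ℝ) ^ 2 * θ ^ 2) ≤
        8 * rbar t * (‖x 0 - xstar‖ + rbar t) * (Real.sqrt 2 * (Real.sqrt θ * (Hfun (fun i => ‖g i‖ ^ 2) c) (t-1))) := by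
      have h3 : rbar (t-1) ≤ rbar t := hrbar_mono (by omega)
      have h12 : sbar (t-1) ≤ ‖x 0 - xstar‖ + rbar t := by
        have := hrbar_mono (show t - 1 ≤ t by omega)
        linarith
      have hsg2 : 0 ≤ Real.sqrt 2 * (Real.sqrt θ * (Hfun (fun i => ‖g i‖ ^ 2) c) (t-1)) :=
        mul_nonneg (Real.sqrt_nonneg 2)
          (mul_nonneg (Real.sqrt_nonneg θ) (le_of_lt (hHpos (t-1))))
      have hr0 := hrbar_pos (t-1)
      have hr1 := hrbar_pos t
      have hAB : 0 ≤ ‖x 0 - xstar‖ + rbar t := by linarith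
      calc 8 * rbar (t-1) * sbar (t-1) * Real.sqrt (θ * G (t-1) + 4 * L ^ 2 * (d:ℝ) ^ 2 * θ ^ 2)
          ≤ 8 * rbar (t-1) * sbar (t-1) * (Real.sqrt 2 * (Real.sqrt θ * (Hfun (fun i => ‖g i‖ ^ 2) c) (t-1))) := by
            apply mul_le_mul_of_nonneg_left hsq
            exact mul_nonneg (mul_nonneg (by norm_num) (le_of_lt hr0)) hsbar0
        _ ≤ 8 * rbar t * (‖x 0 - xstar‖ + rbar t) * (Real.sqrt 2 * (Real.sqrt θ * (Hfun (fun i => ‖g i‖ ^ 2) c) (t-1))) := by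
            apply mul_le_mul_of_nonneg_right _ hsg2
            have : rbar (t-1) * sbar (t-1) ≤ rbar t * (‖x 0 - xstar‖ + rbar t) := by
              apply mul_le_mul h3 h12 hsbar0 (le_of_lt hr1)
            nlinarith
    have h13 : 8 * rbar t * (‖x 0 - xstar‖ + rbar t) * (Real.sqrt 2 * (Real.sqrt θ * (Hfun (fun i => ‖g i‖ ^ 2) c) (t-1))) ≤
        Real.sqrt (G' (t-1)) * (rbar t * (‖x 0 - xstar‖ + rbar t)) := by
      have h14 : 64 * (Real.sqrt θ * (Hfun (fun i => ‖g i‖ ^ 2) c) (t-1)) ≤ Real.sqrt (G' (t-1)) := by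
        have := hSge (t-1); linarith [hSge (t-1)]
      have h15 : 0 ≤ rbar t * (‖x 0 - xstar‖ + rbar t) :=
        mul_nonneg (le_of_lt (hrbar_pos t)) (by linarith [hd0, hrbar_pos t])
      have h16 : 0 < Real.sqrt θ * (Hfun (fun i => ‖g i‖ ^ 2) c) (t-1) := mul_pos hsqrtθ0 (hHpos _)
      have h17 : 0 ≤ 8 * rbar t * (‖x 0 - xstar‖ + rbar t) := by
        nlinarith [h15]
      calc 8 * rbar t * (‖x 0 - xstar‖ + rbar t) * (Real.sqrt 2 * (Real.sqrt θ * (Hfun (fun i => ‖g i‖ ^ 2) c) (t-1)))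
          ≤ 8 * rbar t * (‖x 0 - xstar‖ + rbar t) * (2 * (Real.sqrt θ * (Hfun (fun i => ‖g i‖ ^ 2) c) (t-1))) := by
            apply mul_le_mul_of_nonneg_left _ h17
            exact mul_le_mul_of_nonneg_right hsqrt2le (le_of_lt h16)
        _ = (16 * (Real.sqrt θ * (Hfun (fun i => ‖g i‖ ^ 2) c) (t-1))) * (rbar t * (‖x 0 - xstar‖ + rbar t)) := by
            ring
        _ ≤ Real.sqrt (G' (t-1)) * (rbar t * (‖x 0 - xstar‖ + rbar t)) := by
            apply mul_le_mul_of_nonneg_right _ h15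
            linarith [h14, h16]
    linarith
  -- sum of inverse squares
  have hsq2sum : ∑ k ∈ Finset.range t, (1:ℝ) / ((k:ℝ) + 1) ^ 2 ≤ 2 := by
    have hterm : ∀ k ∈ Finset.range t, (1:ℝ) / ((k:ℝ) + 1) ^ 2 ≤
        2 * ((1:ℝ) / ((k:ℝ) + 1) - 1 / ((k:ℝ) + 2)) := by
      intro k _
      have hk1 : (0:ℝ) < (k:ℝ) + 1 := by positivity
      have hk2 : (0:ℝ) < (k:ℝ) + 2 := by positivity
      have key : (1:ℝ) / ((k:ℝ) + 1) ^ 2 ≤ 2 / (((k:ℝ) + 1) * ((k:ℝ) + 2)) := by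
        rw [div_le_div_iff₀ (by positivity) (by positivity)]
        nlinarith [sq_nonneg ((k:ℝ) + 1), Nat.cast_nonneg (α := ℝ) k]
      have he : 2 * ((1:ℝ) / ((k:ℝ) + 1) - 1 / ((k:ℝ) + 2)) = 2 / (((k:ℝ) + 1) * ((k:ℝ) + 2)) := by
        field_simp
        ring
      rw [he]
      exact key
    calc ∑ k ∈ Finset.range t, (1:ℝ) / ((k:ℝ) + 1) ^ 2
        ≤ ∑ k ∈ Finset.range t, 2 * ((1:ℝ) / ((k:ℝ) + 1) - 1 / ((k:ℝ) + 2)) :=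
          Finset.sum_le_sum hterm
      _ = 2 * ∑ k ∈ Finset.range t, ((fun m : ℕ => (1:ℝ) / ((m:ℝ) + 1)) k
          - (fun m : ℕ => (1:ℝ) / ((m:ℝ) + 1)) (k+1)) := by
          rw [Finset.mul_sum]
          apply Finset.sum_congr rfl
          intro k _
          push_cast
          ring
      _ = 2 * ((1:ℝ) / (((0:ℕ):ℝ) + 1) - 1 / (((t:ℕ):ℝ) + 1)) := by
          rw [Finset.sum_range_sub' (f := fun m : ℕ => (1:ℝ) / ((m:ℝ) + 1))]
      _ ≤ 2 := by
          have h0 : (0:ℝ) ≤ 1 / (((t:ℕ):ℝ) + 1) := by positivity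
          norm_num
          linarith
  -- T4
  have hT4 : ∑ k ∈ Finset.range t, rbar k * (2 * L * (μ k)) ≤
      4 * (L * (d:ℝ)) * (rbar t * (‖x 0 - xstar‖ + rbar t)) := by
    have hterm : ∀ k ∈ Finset.range t, rbar k * (2 * L * (μ k)) ≤
        2 * L * (d:ℝ) * rbar t ^ 2 * ((1:ℝ) / ((k:ℝ) + 1) ^ 2) := by
      intro k hk
      have hk' : k ≤ t := by
        have := Finset.mem_range.1 hk; omega
      have h1 : rbar k ≤ rbar t := hrbar_mono hk'
      rw [hμ]
      have hk1 : (0:ℝ) < ((k:ℝ) + 1) ^ 2 := by positivity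
      have he : rbar k * (2 * L * ((d:ℝ) * rbar k / ((k:ℝ) + 1) ^ 2)) =
          2 * L * (d:ℝ) * rbar k ^ 2 * ((1:ℝ) / ((k:ℝ) + 1) ^ 2) := by
        field_simp
      rw [he]
      have h2 : rbar k ^ 2 ≤ rbar t ^ 2 := by
        nlinarith [mul_le_mul h1 h1 (le_of_lt (hrbar_pos k)) (le_of_lt (hrbar_pos t))]
      have h3 : (0:ℝ) ≤ 2 * L * (d:ℝ) := by positivity
      have h4 : (0:ℝ) ≤ (1:ℝ) / ((k:ℝ) + 1) ^ 2 := by positivity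
      exact mul_le_mul_of_nonneg_right (mul_le_mul_of_nonneg_left h2 h3) h4
    calc ∑ k ∈ Finset.range t, rbar k * (2 * L * (μ k))
        ≤ ∑ k ∈ Finset.range t, 2 * L * (d:ℝ) * rbar t ^ 2 * ((1:ℝ) / ((k:ℝ) + 1) ^ 2) :=
          Finset.sum_le_sum hterm
      _ = 2 * L * (d:ℝ) * rbar t ^ 2 * ∑ k ∈ Finset.range t, (1:ℝ) / ((k:ℝ) + 1) ^ 2 := by
          rw [Finset.mul_sum]
      _ ≤ 2 * L * (d:ℝ) * rbar t ^ 2 * 2 := by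
          apply mul_le_mul_of_nonneg_left hsq2sum (by positivity)
      _ ≤ 4 * (L * (d:ℝ)) * (rbar t * (‖x 0 - xstar‖ + rbar t)) := by
          have hkey : (0:ℝ) ≤ 4 * (L * (d:ℝ)) * (rbar t * ‖x 0 - xstar‖) :=
            mul_nonneg (mul_nonneg (by norm_num)
              (mul_nonneg hL0 (le_of_lt hdpos)))
              (mul_nonneg (le_of_lt (hrbar_pos t)) hd0)
          nlinarith [hkey]
  -- KEY bound
  have hKEY : ∑ k ∈ Finset.range t, rbar k * (f (x k) - f xstar) ≤
      20 * θ * (rbar t + ‖x 0 - xstar‖) * (Real.sqrt (G' (t-1)) + L * (d:ℝ)) * rbar t := by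
    have hA : 0 ≤ (rbar t + ‖x 0 - xstar‖) * (Real.sqrt (G' (t-1)) + L * (d:ℝ)) * rbar t := by
      have := hrbar_pos t
      have := hSpos (t-1)
      positivity
    have hfin : 2 * Real.sqrt (G' (t-1)) * (rbar t * (‖x 0 - xstar‖ + rbar t))
        + Real.sqrt (G' (t-1)) * (rbar t * (‖x 0 - xstar‖ + rbar t))
        + Real.sqrt (G' (t-1)) * (rbar t * (‖x 0 - xstar‖ + rbar t))
        + 4 * (L * (d:ℝ)) * (rbar t * (‖x 0 - xstar‖ + rbar t)) ≤
        20 * θ * (rbar t + ‖x 0 - xstar‖) * (Real.sqrt (G' (t-1)) + L * (d:ℝ)) * rbar t := by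
      have h1 : 0 ≤ Real.sqrt (G' (t-1)) := le_of_lt (hSpos _)
      have h2 : 0 ≤ L * (d:ℝ) := by positivity
      have h3 : 0 < rbar t := hrbar_pos t
      nlinarith [mul_nonneg (mul_nonneg h1 (le_of_lt h3)) hd0,
        mul_nonneg (mul_nonneg h2 (le_of_lt h3)) hd0,
        mul_nonneg h1 (le_of_lt h3), mul_nonneg h2 (le_of_lt h3),
        mul_pos h3 h3,
        mul_nonneg (mul_nonneg h1 (le_of_lt (mul_pos h3 h3))) (le_of_lt hθ0)]
    linarith [hsum1, hT1, hT2, hT3, hT4]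
  -- Jensen and conclusion
  have hWpos : 0 < ∑ k ∈ Finset.range t, rbar k :=
    Finset.sum_pos (fun k _ => hrbar_pos k) (Finset.nonempty_range_iff.2 (by omega))
  have hjensen : f xbar ≤ (∑ k ∈ Finset.range t, rbar k)⁻¹ *
      ∑ k ∈ Finset.range t, rbar k * f (x k) := by
    have hcm : xbar = (Finset.range t).centerMass rbar x := by
      rw [hxbar]; rfl
    have hj := hconv.map_centerMass_le (t := Finset.range t) (w := rbar) (p := x)
      (fun i _ => le_of_lt (hrbar_pos i)) hWpos (fun i _ => Set.mem_univ _)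
    rw [← hcm] at hj
    simpa [Finset.centerMass, smul_eq_mul] using hj
  have hsum_eq : ∑ k ∈ Finset.range t, rbar k * (f (x k) - f xstar)
      = (∑ k ∈ Finset.range t, rbar k * f (x k))
        - (∑ k ∈ Finset.range t, rbar k) * f xstar := by
    rw [Finset.sum_mul, ← Finset.sum_sub_distrib]
    apply Finset.sum_congr rfl
    intro k _
    ring
  have hfinal : f xbar - f xstar ≤ (∑ k ∈ Finset.range t, rbar k)⁻¹ *
      (20 * θ * (rbar t + ‖x 0 - xstar‖) * (Real.sqrt (G' (t-1)) + L * (d:ℝ)) * rbar t) := by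
    have h1 : f xbar - f xstar ≤ (∑ k ∈ Finset.range t, rbar k)⁻¹ *
        ∑ k ∈ Finset.range t, rbar k * (f (x k) - f xstar) := by
      rw [hsum_eq, mul_sub]
      have h2 : (∑ k ∈ Finset.range t, rbar k)⁻¹ * ((∑ k ∈ Finset.range t, rbar k) * f xstar)
          = f xstar := by
        field_simp
      rw [h2]
      linarith
    refine le_trans h1 ?_
    exact mul_le_mul_of_nonneg_left hKEY (le_of_lt (inv_pos.2 hWpos))
  have hgoal_eq : 20 * θ * (rbar t + ‖x 0 - xstar‖) * (Real.sqrt (G' (t - 1)) + L * d) /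
      (∑ k ∈ Finset.range t, rbar k / rbar t) =
      (∑ k ∈ Finset.range t, rbar k)⁻¹ *
      (20 * θ * (rbar t + ‖x 0 - xstar‖) * (Real.sqrt (G' (t-1)) + L * (d:ℝ)) * rbar t) := by
    rw [← Finset.sum_div, div_div_eq_mul_div, div_eq_inv_mul]
  rw [hgoal_eq]
  exact hfinal
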